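/- Let n ≥ 1. If A is an n×n random real matrix whose entries A_ij are independent, each distributed according to a Borel probability measure μ_ij on ℝ that is atomless off 0, then P(det A = 0) = P(per Ã = 0), where Ã is the indicator matrix of A. -/

import Mathlib

open MeasureTheory

/-- The indicator matrix of a real matrix: entry `1` where the entry is nonzero, `0` where
the entry is `0`. -/
noncomputable def indicatorMatrix {n : ℕ} (A : Matrix (Fin n) (Fin n) ℝ) :
    Matrix (Fin n) (Fin n) ℝ :=
  Matrix.of fun i j => if A i j = 0 then 0 else 1

namespace TypeAAux

open Matrix Finset

lemma permanent_indicator_eq_zero_iff {n : ℕ} (M : Matrix (Fin n) (Fin n) ℝ) :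
    (indicatorMatrix M).permanent = 0 ↔ ∀ σ : Equiv.Perm (Fin n), ∃ i, M (σ i) i = 0 := by
  have hnn : ∀ σ ∈ (univ : Finset (Equiv.Perm (Fin n))),
      (0:ℝ) ≤ ∏ i, indicatorMatrix M (σ i) i := by
    intro σ _
    refine Finset.prod_nonneg fun i _ => ?_
    simp only [indicatorMatrix, Matrix.of_apply]
    split <;> norm_num
  rw [Matrix.permanent, Finset.sum_eq_zero_iff_of_nonneg hnn]
  constructor
  · intro h σ
    have h2 := h σ (mem_univ σ)
    rcases Finset.prod_eq_zero_iff.mp h2 with ⟨i, _, hi⟩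
    refine ⟨i, ?_⟩
    by_contra hne
    simp [indicatorMatrix, hne] at hi
  · intro h σ _
    obtain ⟨i, hi⟩ := h σ
    exact Finset.prod_eq_zero (mem_univ i) (by simp [indicatorMatrix, hi])

lemma det_eq_zero_of_no_matching {n : ℕ} (M : Matrix (Fin n) (Fin n) ℝ)
    (h : ∀ σ : Equiv.Perm (Fin n), ∃ i, M (σ i) i = 0) : M.det = 0 := by
  rw [Matrix.det_apply]
  refine Finset.sum_eq_zero fun σ _ => ?_
  obtain ⟨i, hi⟩ := h σ
  have hz : (∏ x : Fin n, M (σ x) x) = 0 := Finset.prod_eq_zero (mem_univ i) hi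
  rw [hz, smul_zero]

lemma measurable_entry {a b : ℕ} (i : Fin a) (j : Fin b) :
    Measurable fun A : Fin a → Fin b → ℝ => A i j :=
  (measurable_pi_apply j).comp (measurable_pi_apply i)

lemma measurable_det (m : ℕ) :
    Measurable fun A : Fin m → Fin m → ℝ => (Matrix.of A).det := by
  simp_rw [Matrix.det_apply']
  refine Finset.measurable_sum _ fun σ _ => ?_
  exact (Finset.measurable_prod Finset.univ fun i _ => measurable_entry (σ i) i).const_mul _

lemma measurableSet_bad {m : ℕ} (g : Fin m → Fin m) :
    MeasurableSet {A : Fin m → Fin m → ℝ | (Matrix.of A).det = 0 ∧ ∀ i, A (g i) i ≠ 0} := by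
  have h1 : MeasurableSet {A : Fin m → Fin m → ℝ | (Matrix.of A).det = 0} :=
    measurable_det m (measurableSet_singleton 0)
  have h2 : MeasurableSet {A : Fin m → Fin m → ℝ | ∀ i, A (g i) i ≠ 0} := by
    rw [Set.setOf_forall]
    exact MeasurableSet.iInter fun i =>
      (measurable_entry (g i) i (measurableSet_singleton 0)).compl
  exact h1.inter h2

lemma measurableSet_badid (m : ℕ) :
    MeasurableSet {A : Fin m → Fin m → ℝ | (Matrix.of A).det = 0 ∧ ∀ i, A i i ≠ 0} :=
  measurableSet_bad id

lemma map_pi_comp {ι : Type*} [Fintype ι] {α β : Type*} [MeasurableSpace α] [MeasurableSpace β]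
    (μ : ι → Measure α) [∀ i, IsProbabilityMeasure (μ i)] (f : α → β) (hf : Measurable f) :
    Measure.map (fun g (i : ι) => f (g i)) (Measure.pi μ) = Measure.pi fun i => (μ i).map f := by
  haveI : ∀ i, IsProbabilityMeasure ((μ i).map f) := fun i =>
    Measure.isProbabilityMeasure_map hf.aemeasurable
  refine (Measure.pi_eq fun s hs => ?_).symm
  have hmeas : Measurable fun (g : ι → α) (i : ι) => f (g i) :=
    measurable_pi_lambda _ fun i => hf.comp (measurable_pi_apply i)
  rw [Measure.map_apply hmeas (MeasurableSet.univ_pi hs)]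
  have hpre : (fun g (i : ι) => f (g i)) ⁻¹' Set.pi Set.univ s
      = Set.pi Set.univ fun i => f ⁻¹' s i := by
    ext g; simp [Set.mem_pi]
  rw [hpre, Measure.pi_pi]
  exact Finset.prod_congr rfl fun i _ => (Measure.map_apply hf (hs i)).symm

lemma map_row_restrict (n : ℕ) (τ : Fin (n+1) → Measure ℝ) [∀ j, IsProbabilityMeasure (τ j)] :
    Measure.map (fun r : Fin (n+1) → ℝ => fun j : Fin n => r (Fin.castSucc j)) (Measure.pi τ)
      = Measure.pi fun j : Fin n => τ (Fin.castSucc j) := by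
  have h1 := measurePreserving_piFinSuccAbove τ (Fin.last n)
  have hc : (fun r : Fin (n+1) → ℝ => fun j : Fin n => r (Fin.castSucc j))
      = Prod.snd ∘ (MeasurableEquiv.piFinSuccAbove (fun _ : Fin (n+1) => ℝ) (Fin.last n)) := by
    funext r j
    simp [MeasurableEquiv.piFinSuccAbove, Fin.removeNth, Fin.succAbove_last, Fin.init]
  rw [hc, ← Measure.map_map measurable_snd
      (MeasurableEquiv.piFinSuccAbove (fun _ : Fin (n+1) => ℝ) (Fin.last n)).measurable,
    h1.map_eq, Measure.map_snd_prod]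
  simp [Fin.succAbove_last]

lemma hyperplane_null (m : ℕ) (τ : Fin (m+1) → Measure ℝ) [∀ j, IsProbabilityMeasure (τ j)]
    (hat : ∀ x : ℝ, x ≠ 0 → τ (Fin.last m) {x} = 0)
    (w : Fin (m+1) → ℝ) (hw : w (Fin.last m) ≠ 0) :
    Measure.pi τ {x : Fin (m+1) → ℝ | (∑ j, w j * x j) = 0 ∧ x (Fin.last m) ≠ 0} = 0 := by
  set e := MeasurableEquiv.piFinSuccAbove (fun _ : Fin (m+1) => ℝ) (Fin.last m) with he
  have h1 := measurePreserving_piFinSuccAbove τ (Fin.last m)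
  set U := {x : Fin (m+1) → ℝ | (∑ j, w j * x j) = 0 ∧ x (Fin.last m) ≠ 0} with hU
  have hUm : MeasurableSet U := by
    refine MeasurableSet.inter ?_ ?_
    · exact (Finset.univ.measurable_sum fun j _ => by fun_prop)
        (measurableSet_singleton 0)
    · exact ((measurable_pi_apply (Fin.last m)) (measurableSet_singleton 0)).compl
  have h2 : Measure.pi τ U
      = ((τ (Fin.last m)).prod (Measure.pi fun j => τ ((Fin.last m).succAbove j)))
        (e.symm ⁻¹' U) := by
    rw [← (h1.symm e).map_eq, Measure.map_apply e.symm.measurable hUm]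
  rw [h2, Measure.prod_apply_symm (e.symm.measurable hUm)]
  have key : ∀ y : Fin m → ℝ,
      (τ (Fin.last m)) ((fun t => (t, y)) ⁻¹' (e.symm ⁻¹' U)) = 0 := by
    intro y
    set c := w (Fin.last m) with hc
    set r := ∑ k : Fin m, w (Fin.castSucc k) * y k with hr
    have hsubset : ((fun t => (t, y)) ⁻¹' (e.symm ⁻¹' U)) ⊆ {-r / c} \ {0} := by
      intro t ht
      simp only [Set.mem_preimage] at ht
      have hins : e.symm (t, y) = Fin.snoc y t := Fin.insertNth_last' t y
      rw [hins] at ht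
      obtain ⟨hsum, hne⟩ := ht
      rw [Fin.snoc_last] at hne
      rw [Fin.sum_univ_castSucc] at hsum
      simp only [Fin.snoc_castSucc, Fin.snoc_last] at hsum
      have ht' : t = -r / c := by
        rw [hr, hc]
        rw [eq_div_iff (show w (Fin.last m) ≠ 0 from hw)]
        linarith [hsum]
      exact ⟨ht', hne⟩
    have hnull : (τ (Fin.last m)) ({-r / c} \ {0}) = 0 := by
      rcases eq_or_ne (-r / c) 0 with h0 | h0
      · simp [h0]
      · exact measure_mono_null Set.diff_subset (hat _ h0)
    exact measure_mono_null hsubset hnull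
  exact (lintegral_congr key).trans lintegral_zero

/-- The top-left `n × n` block of the first `n` rows. -/
def Sres {n : ℕ} (B : Fin n → Fin (n+1) → ℝ) : Fin n → Fin n → ℝ :=
  fun i l => B i (Fin.castSucc l)

/-- The cofactor coefficients for expansion along the last row. -/
noncomputable def coefD {n : ℕ} (B : Fin n → Fin (n+1) → ℝ) (j : Fin (n+1)) : ℝ :=
  (-1 : ℝ) ^ (n + (j : ℕ)) * (Matrix.of fun i l => B i (j.succAbove l)).det

lemma coefD_last {n : ℕ} (B : Fin n → Fin (n+1) → ℝ) :
    coefD B (Fin.last n) = (Matrix.of (Sres B)).det := by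
  rw [coefD, Fin.val_last, show ((-1 : ℝ)) ^ (n + n) = 1 by
    rw [← two_mul, pow_mul]; norm_num, one_mul]
  refine congrArg Matrix.det (congrArg Matrix.of ?_)
  funext i l
  rw [Fin.succAbove_last]
  rfl

lemma key_diag : ∀ (m : ℕ) (ν : Fin m → Fin m → Measure ℝ),
    (∀ i j, IsProbabilityMeasure (ν i j)) →
    (∀ i j, ∀ x : ℝ, x ≠ 0 → ν i j {x} = 0) →
    Measure.pi (fun i => Measure.pi fun j => ν i j)
      {A : Fin m → Fin m → ℝ | (Matrix.of A).det = 0 ∧ ∀ i, A i i ≠ 0} = 0 := by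
  intro m
  induction m with
  | zero =>
    intro ν _ _
    have hempty : {A : Fin 0 → Fin 0 → ℝ | (Matrix.of A).det = 0 ∧ ∀ i, A i i ≠ 0} = ∅ := by
      ext A
      simp [Matrix.det_fin_zero]
    rw [hempty]
    exact measure_empty
  | succ n IH =>
    intro ν hprob hat
    haveI : ∀ i j, IsProbabilityMeasure (ν i j) := hprob
    set ρ := Measure.pi (fun j => ν (Fin.last n) j) with hρ
    set Q := Measure.pi (fun i : Fin n => Measure.pi fun j => ν (Fin.castSucc i) j) with hQdef
    set e := MeasurableEquiv.piFinSuccAbove (fun _ : Fin (n+1) => (Fin (n+1) → ℝ))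
      (Fin.last n) with he
    have h1 : MeasurePreserving e
        (Measure.pi fun i => Measure.pi fun j => ν i j) (ρ.prod Q) := by
      have h0 := measurePreserving_piFinSuccAbove
        (fun i : Fin (n+1) => Measure.pi fun j => ν i j) (Fin.last n)
      simp only [Fin.succAbove_last] at h0
      exact h0
    set bad := {A : Fin (n+1) → Fin (n+1) → ℝ | (Matrix.of A).det = 0 ∧ ∀ i, A i i ≠ 0}
      with hbaddef
    have hbadm : MeasurableSet bad := measurableSet_badid (n+1)
    have hsm : MeasurableSet (e.symm ⁻¹' bad) := e.symm.measurable hbadm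
    have hPbad : (Measure.pi fun i => Measure.pi fun j => ν i j) bad
        = (ρ.prod Q) (e.symm ⁻¹' bad) := by
      rw [← (h1.symm e).map_eq, Measure.map_apply e.symm.measurable hbadm]
    rw [hPbad, Measure.prod_apply_symm hsm]
    have hmem : ∀ (x : Fin (n+1) → ℝ) (B : Fin n → Fin (n+1) → ℝ),
        e.symm (x, B) ∈ bad ↔
          ((∑ j, coefD B j * x j) = 0 ∧ x (Fin.last n) ≠ 0 ∧
            ∀ i : Fin n, B i (Fin.castSucc i) ≠ 0) := by
      intro x B
      have hins : e.symm (x, B) = Fin.snoc B x := Fin.insertNth_last' x B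
      have hdet : (Matrix.of (Fin.snoc B x : Fin (n+1) → Fin (n+1) → ℝ)).det
          = ∑ j, coefD B j * x j := by
        rw [Matrix.det_succ_row _ (Fin.last n)]
        refine Finset.sum_congr rfl fun j _ => ?_
        have hsub : (Matrix.of (Fin.snoc B x : Fin (n+1) → Fin (n+1) → ℝ)).submatrix
              (Fin.last n).succAbove j.succAbove
            = Matrix.of fun i l => B i (j.succAbove l) := by
          ext i l
          simp [Matrix.submatrix_apply, Fin.succAbove_last, Fin.snoc_castSucc]
        rw [hsub]
        have hMx : (Matrix.of (Fin.snoc B x : Fin (n+1) → Fin (n+1) → ℝ)) (Fin.last n) j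
            = x j := by
          simp [Fin.snoc_last]
        rw [hMx, coefD, Fin.val_last]
        ring
      rw [hbaddef, Set.mem_setOf_eq, hins]
      constructor
      · rintro ⟨h0, hdiag⟩
        refine ⟨by rw [← hdet]; exact h0, ?_, ?_⟩
        · have hl := hdiag (Fin.last n)
          rwa [Fin.snoc_last] at hl
        · intro i
          have hi := hdiag (Fin.castSucc i)
          rwa [Fin.snoc_castSucc] at hi
      · rintro ⟨h0, hx, hB⟩
        refine ⟨by rw [hdet]; exact h0, ?_⟩
        intro i
        refine Fin.lastCases ?_ ?_ i
        · rw [Fin.snoc_last]; exact hx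
        · intro k
          rw [Fin.snoc_castSucc]; exact hB k
    have hSmeas : Measurable (Sres (n := n)) :=
      measurable_pi_lambda _ fun i => measurable_pi_lambda _ fun l =>
        measurable_entry i (Fin.castSucc l)
    have hQN : Q {B | (Matrix.of (Sres B)).det = 0 ∧ ∀ i : Fin n, B i (Fin.castSucc i) ≠ 0}
        = 0 := by
      have hmap : Measure.map Sres Q
          = Measure.pi fun i : Fin n =>
              Measure.pi fun l => ν (Fin.castSucc i) (Fin.castSucc l) := by
        have h2 := map_pi_comp (fun i : Fin n => Measure.pi fun j => ν (Fin.castSucc i) j)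
          (fun r : Fin (n+1) → ℝ => fun l : Fin n => r (Fin.castSucc l))
          (measurable_pi_lambda _ fun l => measurable_pi_apply _)
        rw [hQdef, show (Sres (n := n)) = (fun g (i : Fin n) =>
            (fun r : Fin (n+1) → ℝ => fun l : Fin n => r (Fin.castSucc l)) (g i)) from rfl, h2]
        exact congrArg Measure.pi
          (funext fun i => map_row_restrict n fun j => ν (Fin.castSucc i) j)
      have hset : {B | (Matrix.of (Sres B)).det = 0 ∧ ∀ i : Fin n, B i (Fin.castSucc i) ≠ 0}
          = Sres ⁻¹' {C : Fin n → Fin n → ℝ | (Matrix.of C).det = 0 ∧ ∀ i, C i i ≠ 0} := rfl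
      rw [hset, ← Measure.map_apply hSmeas (measurableSet_badid n), hmap]
      exact IH (fun i j => ν (Fin.castSucc i) (Fin.castSucc j)) (fun i j => hprob _ _)
        (fun i j => hat _ _)
    have hae : ∀ᵐ B ∂Q, ρ ((fun x => (x, B)) ⁻¹' (e.symm ⁻¹' bad)) = 0 := by
      filter_upwards [measure_eq_zero_iff_ae_notMem.mp hQN] with B hBnot
      by_cases hdiag : ∀ i : Fin n, B i (Fin.castSucc i) ≠ 0
      · have hdS : (Matrix.of (Sres B)).det ≠ 0 := fun h => hBnot ⟨h, hdiag⟩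
        have hdlast : coefD B (Fin.last n) ≠ 0 := by
          rw [coefD_last]; exact hdS
        refine measure_mono_null ?_
          (hyperplane_null n (fun j => ν (Fin.last n) j) (hat _ _) (coefD B) hdlast)
        intro x hx
        rw [Set.mem_preimage, Set.mem_preimage, hmem] at hx
        exact ⟨hx.1, hx.2.1⟩
      · have hempty : ((fun x => (x, B)) ⁻¹' (e.symm ⁻¹' bad)) = ∅ := by
          ext x
          simp only [Set.mem_preimage, Set.mem_empty_iff_false, iff_false]
          intro hx
          rw [hmem] at hx
          exact hdiag hx.2.2
        rw [hempty]
        exact measure_empty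
    exact (lintegral_congr_ae hae).trans lintegral_zero

lemma key_perm (m : ℕ) (μ : Fin m → Fin m → Measure ℝ)
    [∀ i j, IsProbabilityMeasure (μ i j)]
    (hat : ∀ i j, ∀ x : ℝ, x ≠ 0 → μ i j {x} = 0) (σ : Equiv.Perm (Fin m)) :
    Measure.pi (fun i => Measure.pi fun j => μ i j)
      {A : Fin m → Fin m → ℝ | (Matrix.of A).det = 0 ∧ ∀ i, A (σ i) i ≠ 0} = 0 := by
  set T := MeasurableEquiv.piCongrLeft (fun _ : Fin m => (Fin m → ℝ)) σ with hT
  have hTpres : MeasurePreserving T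
      (Measure.pi fun i => Measure.pi fun j => μ (σ i) j)
      (Measure.pi fun i => Measure.pi fun j => μ i j) :=
    measurePreserving_piCongrLeft (fun i => Measure.pi fun j => μ i j) σ
  have hbadm : MeasurableSet
      {A : Fin m → Fin m → ℝ | (Matrix.of A).det = 0 ∧ ∀ i, A (σ i) i ≠ 0} :=
    measurableSet_bad σ
  rw [← hTpres.map_eq, Measure.map_apply T.measurable hbadm]
  have hTC : ∀ C : Fin m → Fin m → ℝ, T C = fun b => C (σ.symm b) := by
    intro C
    funext b
    have h := Equiv.piCongrLeft_apply_apply (P := fun _ : Fin m => (Fin m → ℝ)) (e := σ)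
      C (σ.symm b)
    rw [hT, MeasurableEquiv.coe_piCongrLeft]
    calc (σ.piCongrLeft (fun _ => Fin m → ℝ)) C b
        = (σ.piCongrLeft (fun _ => Fin m → ℝ)) C (σ (σ.symm b)) := by
          rw [Equiv.apply_symm_apply]
      _ = C (σ.symm b) := h
  have hsign : ((Equiv.Perm.sign σ.symm : ℤ) : ℝ) ≠ 0 :=
    Int.cast_ne_zero.mpr (Units.ne_zero _)
  have hpre : T ⁻¹' {A : Fin m → Fin m → ℝ | (Matrix.of A).det = 0 ∧ ∀ i, A (σ i) i ≠ 0}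
      = {C : Fin m → Fin m → ℝ | (Matrix.of C).det = 0 ∧ ∀ i, C i i ≠ 0} := by
    ext C
    simp only [Set.mem_preimage, Set.mem_setOf_eq, hTC]
    have hdp : (Matrix.of fun b => C (σ.symm b)).det
        = ((Equiv.Perm.sign σ.symm : ℤ) : ℝ) * (Matrix.of C).det := by
      have h := Matrix.det_permute σ.symm (Matrix.of C)
      convert h using 2
      exact rfl
    constructor
    · rintro ⟨hdet, hdiag⟩
      refine ⟨?_, ?_⟩
      · rw [hdp] at hdet
        rcases mul_eq_zero.mp hdet with h | h
        · exact absurd h hsign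
        · exact h
      · intro i
        have hi := hdiag i
        simpa using hi
    · rintro ⟨hdet, hdiag⟩
      refine ⟨?_, ?_⟩
      · rw [hdp, hdet, mul_zero]
      · intro i
        simpa using hdiag i
  rw [hpre]
  exact key_diag m (fun i j => μ (σ i) j) (fun i j => inferInstance) (fun i j => hat _ _)

end TypeAAux

/-- For a random `n × n` real matrix with independent entries whose laws
are atomless off `0`, `P(det A = 0) = P(per Ã = 0)`, where `Ã` is the indicator matrix. -/
theorem typeA_prob_det_zero_eq_prob_permanent_indicator_zero
    (n : ℕ) (hn : 1 ≤ n)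
    (μ : Fin n → Fin n → Measure ℝ)
    [∀ i j, IsProbabilityMeasure (μ i j)]
    (hatomless : ∀ i j, ∀ x : ℝ, x ≠ 0 → μ i j {x} = 0) :
    Measure.pi (fun i => Measure.pi (fun j => μ i j))
        {A : Fin n → Fin n → ℝ | (Matrix.of A).det = 0}
      = Measure.pi (fun i => Measure.pi (fun j => μ i j))
        {A : Fin n → Fin n → ℝ | (indicatorMatrix (Matrix.of A)).permanent = 0} := by
  classical
  set P := Measure.pi fun i => Measure.pi fun j => μ i j with hP
  set E := {A : Fin n → Fin n → ℝ | ∀ σ : Equiv.Perm (Fin n), ∃ i, A (σ i) i = 0} with hE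
  have hEm : MeasurableSet E := by
    rw [hE, Set.setOf_forall]
    refine MeasurableSet.iInter fun σ => ?_
    rw [Set.setOf_exists]
    exact MeasurableSet.iUnion fun i =>
      TypeAAux.measurable_entry (σ i) i (measurableSet_singleton 0)
  have hperE : {A : Fin n → Fin n → ℝ | (indicatorMatrix (Matrix.of A)).permanent = 0} = E := by
    ext A
    exact TypeAAux.permanent_indicator_eq_zero_iff (Matrix.of A)
  have hED : E ⊆ {A : Fin n → Fin n → ℝ | (Matrix.of A).det = 0} := fun A hA =>
    TypeAAux.det_eq_zero_of_no_matching (Matrix.of A) hA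
  have hdiff : P ({A : Fin n → Fin n → ℝ | (Matrix.of A).det = 0} \ E) = 0 := by
    refine measure_mono_null ?_
      (measure_iUnion_null fun σ : Equiv.Perm (Fin n) =>
        TypeAAux.key_perm n μ hatomless σ)
    rintro A ⟨hdet, hnE⟩
    rw [hE, Set.mem_setOf_eq] at hnE
    push_neg at hnE
    obtain ⟨σ, hσ⟩ := hnE
    exact Set.mem_iUnion.mpr ⟨σ, hdet, hσ⟩
  calc P {A : Fin n → Fin n → ℝ | (Matrix.of A).det = 0}
      = P ({A : Fin n → Fin n → ℝ | (Matrix.of A).det = 0} ∩ E)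
        + P ({A : Fin n → Fin n → ℝ | (Matrix.of A).det = 0} \ E) :=
        (measure_inter_add_diff _ hEm).symm
    _ = P E := by rw [hdiff, add_zero, Set.inter_eq_self_of_subset_right hED]
    _ = P {A : Fin n → Fin n → ℝ | (indicatorMatrix (Matrix.of A)).permanent = 0} := by
        rw [hperE]
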